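/- Assume μ > L_f, let λ > 0, and set γ = (μ − L_f)λ/(μ − L_f + λ). Fix x, z ∈ E and y ∈ F. Suppose u ∈ X minimizes w ↦ K(w, y, z) + (λ/2)‖w − x‖² over X and x* ∈ X minimizes w ↦ K(w, y, z) over X. Then γ·‖x − x*‖ ≤ λ·‖x − u‖. -/
import Mathlib

open MeasureTheory
open scoped RealInnerProductSpace
open Filter Set
open scoped Topology

lemma vi_aux {E : Type*} [NormedAddCommGroup E] [InnerProductSpace ℝ E]
    {X : Set E} (hXcv : Convex ℝ X) {g : E → ℝ} {D : E →L[ℝ] ℝ} {p : E}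
    (hD : HasFDerivAt g D p) (hp : p ∈ X)
    (hmin : ∀ w ∈ X, g p ≤ g w) {w : E} (hw : w ∈ X) :
    0 ≤ D (w - p) := by
  set φ : ℝ → ℝ := fun t => g (p + t • (w - p)) with hφdef
  have hpath : HasDerivAt (fun t : ℝ => p + t • (w - p)) (w - p) 0 := by
    simpa using ((hasDerivAt_id (0:ℝ)).smul_const (w - p)).const_add p
  have hD' : HasFDerivAt g D (p + (0:ℝ) • (w - p)) := by simpa using hD
  have hφ : HasDerivAt φ (D (w - p)) 0 := hD'.comp_hasDerivAt 0 hpath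
  have h2 : Tendsto (slope φ 0) (𝓝[>] 0) (𝓝 (D (w - p))) :=
    (hasDerivAt_iff_tendsto_slope.mp hφ).mono_left
      (nhdsWithin_mono 0 (fun t ht => ne_of_gt ht))
  refine ge_of_tendsto h2 ?_
  filter_upwards [Ioo_mem_nhdsGT_of_mem (Set.mem_Ico.mpr ⟨le_refl (0:ℝ), zero_lt_one⟩)] with t ht
  have hin : p + t • (w - p) ∈ X := by
    have h := hXcv hp hw (by linarith [ht.2] : (0:ℝ) ≤ 1 - t) (le_of_lt ht.1) (by ring)
    have : (1 - t) • p + t • w = p + t • (w - p) := by module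
    rwa [this] at h
  have h0 : φ 0 = g p := by simp [hφdef]
  rw [slope_def_field]
  apply div_nonneg
  · rw [h0]; linarith [hmin _ hin]
  · linarith [ht.1]

theorem stmt_7
    {E F : Type*}
    [NormedAddCommGroup E] [InnerProductSpace ℝ E] [FiniteDimensional ℝ E]
    [NormedAddCommGroup F] [InnerProductSpace ℝ F] [FiniteDimensional ℝ F]
    (A : E →L[ℝ] F) (b : F) (X : Set E)
    (hXne : X.Nonempty) (hXcl : IsClosed X) (hXcv : Convex ℝ X)
    (f : E → ℝ) (f' : E → E) (Lf : ℝ) (hLf : 0 ≤ Lf)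
    (hf : ∀ x, HasGradientAt f (f' x) x)
    (hlip : ∀ u v, ‖f' u - f' v‖ ≤ Lf * ‖u - v‖)
    (ρ μ : ℝ) (hρ : 0 ≤ ρ) (hμ : 0 < μ)
    (K : E → F → E → ℝ)
    (hK : ∀ x y z, K x y z =
      f x + ⟪A x - b, y⟫ + (ρ/2) * ‖A x - b‖^2 + (μ/2) * ‖x - z‖^2)
    (hμLf : Lf < μ) (lam : ℝ) (hlam : 0 < lam)
    (γ : ℝ) (hγ : γ = (μ - Lf)*lam/(μ - Lf + lam))
    (x z : E) (y : F) (u xstar : E)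
    (hu : u ∈ X ∧ ∀ w ∈ X,
      K u y z + (lam/2) * ‖u - x‖^2 ≤ K w y z + (lam/2) * ‖w - x‖^2)
    (hxstar : xstar ∈ X ∧ ∀ w ∈ X, K xstar y z ≤ K w y z) :
    γ * ‖x - xstar‖ ≤ lam * ‖x - u‖ := by
  classical
  have hKeq : (fun w => K w y z)
      = fun w => f w + ⟪A w - b, y⟫ + (ρ/2) * ⟪A w - b, A w - b⟫ + (μ/2) * ⟪w - z, w - z⟫ := by
    funext w
    rw [hK, real_inner_self_eq_norm_sq, real_inner_self_eq_norm_sq]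
  obtain ⟨Φ, hΦ, hΦval⟩ : ∃ Φ : E → (E →L[ℝ] ℝ),
      (∀ w, HasFDerivAt (fun w => K w y z) (Φ w) w) ∧
      (∀ w v, Φ w v = ⟪f' w, v⟫ + ⟪A v, y⟫ + ρ * ⟪A w - b, A v⟫ + μ * ⟪w - z, v⟫) := by
    refine ⟨fun w =>
      (InnerProductSpace.toDual ℝ E (f' w) : E →L[ℝ] ℝ)
      + ((fderivInnerCLM ℝ (A w - b, y)).comp ((A : E →L[ℝ] F).prod (0 : E →L[ℝ] F)))
      + (ρ/2) • ((fderivInnerCLM ℝ (A w - b, A w - b)).comp ((A : E →L[ℝ] F).prod (A : E →L[ℝ] F)))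
      + (μ/2) • ((fderivInnerCLM ℝ (w - z, w - z)).comp
          ((ContinuousLinearMap.id ℝ E).prod (ContinuousLinearMap.id ℝ E))), ?_, ?_⟩
    · intro w
      rw [hKeq]
      have h1 : HasFDerivAt f (InnerProductSpace.toDual ℝ E (f' w) : E →L[ℝ] ℝ) w :=
        (hf w).hasFDerivAt
      have hA : HasFDerivAt (fun v => A v - b) (A : E →L[ℝ] F) w := A.hasFDerivAt.sub_const b
      have h2 := hA.inner ℝ (hasFDerivAt_const y w)
      have h3 := (hA.inner ℝ hA).const_mul (ρ/2)
      have hid : HasFDerivAt (fun v : E => v - z) (ContinuousLinearMap.id ℝ E) w :=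
        (hasFDerivAt_id w).sub_const z
      have h4 := (hid.inner ℝ hid).const_mul (μ/2)
      exact ((h1.add h2).add h3).add h4
    · intro w v
      simp [fderivInnerCLM_apply, real_inner_comm (A v) (A w - b), real_inner_comm v (w - z)]
      ring
  obtain ⟨Ψ, hΨ, hΨval⟩ : ∃ Ψ : E →L[ℝ] ℝ,
      HasFDerivAt (fun w => K w y z + (lam/2) * ‖w - x‖^2) Ψ u ∧
      (∀ v, Ψ v = Φ u v + lam * ⟪u - x, v⟫) := by
    refine ⟨Φ u + (lam/2) • ((fderivInnerCLM ℝ (u - x, u - x)).comp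
        ((ContinuousLinearMap.id ℝ E).prod (ContinuousLinearMap.id ℝ E))), ?_, ?_⟩
    · have hq : (fun w : E => (lam/2) * ‖w - x‖^2) = fun w => (lam/2) * ⟪w - x, w - x⟫ := by
        funext w; rw [real_inner_self_eq_norm_sq]
      have hid : HasFDerivAt (fun v : E => v - x) (ContinuousLinearMap.id ℝ E) u :=
        (hasFDerivAt_id u).sub_const x
      have h5 : HasFDerivAt (fun w : E => (lam/2) * ‖w - x‖^2)
          ((lam/2) • ((fderivInnerCLM ℝ (u - x, u - x)).comp
            ((ContinuousLinearMap.id ℝ E).prod (ContinuousLinearMap.id ℝ E)))) u := by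
        rw [hq]; exact (hid.inner ℝ hid).const_mul (lam/2)
      exact (hΦ u).add h5
    · intro v
      simp [fderivInnerCLM_apply, real_inner_comm v (u - x)]
      ring
  -- variational inequalities
  have VI1 : 0 ≤ Ψ (xstar - u) := vi_aux hXcv hΨ hu.1 hu.2 hxstar.1
  have VI2 : 0 ≤ Φ xstar (u - xstar) := vi_aux hXcv (hΦ xstar) hxstar.1 hxstar.2 hu.1
  have hcomb : Φ u (u - xstar) - Φ xstar (u - xstar) ≤ lam * ⟪u - x, xstar - u⟫ := by
    have h1 := hΨval (xstar - u)
    have hneg : Φ u (xstar - u) = - Φ u (u - xstar) := by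
      rw [← map_neg]; congr 1; abel
    rw [hneg] at h1
    rw [h1] at VI1
    linarith
  have VI2' : 0 ≤ Φ xstar (u - xstar) := VI2
  -- strong monotonicity
  have hmono : (μ - Lf) * ‖u - xstar‖^2 ≤ Φ u (u - xstar) - Φ xstar (u - xstar) := by
    have e1 : Φ u (u - xstar) - Φ xstar (u - xstar)
        = ⟪f' u - f' xstar, u - xstar⟫ + ρ * ⟪A (u - xstar), A (u - xstar)⟫
          + μ * ⟪u - xstar, u - xstar⟫ := by
      simp only [hΦval, map_sub, inner_sub_left, inner_sub_right]
      ring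
    have h6 : (0:ℝ) ≤ ⟪A (u - xstar), A (u - xstar)⟫ := real_inner_self_nonneg
    have hcs : -⟪f' u - f' xstar, u - xstar⟫ ≤ Lf * ‖u - xstar‖^2 := by
      have h1 := abs_real_inner_le_norm (f' u - f' xstar) (u - xstar)
      have h3 : ‖f' u - f' xstar‖ * ‖u - xstar‖ ≤ (Lf * ‖u - xstar‖) * ‖u - xstar‖ :=
        mul_le_mul_of_nonneg_right (hlip u xstar) (norm_nonneg _)
      nlinarith [neg_abs_le (⟪f' u - f' xstar, u - xstar⟫ : ℝ)]
    have hn1 : ⟪A (u - xstar), A (u - xstar)⟫ = ‖A (u - xstar)‖^2 :=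
      real_inner_self_eq_norm_sq _
    have hn2 : ⟪u - xstar, u - xstar⟫ = ‖u - xstar‖^2 := real_inner_self_eq_norm_sq _
    rw [e1, hn1, hn2]
    nlinarith [mul_nonneg hρ (sq_nonneg ‖A (u - xstar)‖)]
  -- Cauchy–Schwarz on the right side
  have hrhs : lam * ⟪u - x, xstar - u⟫ ≤ lam * (‖u - x‖ * ‖u - xstar‖) := by
    have h1 := real_inner_le_norm (u - x) (xstar - u)
    have h2 : ‖xstar - u‖ = ‖u - xstar‖ := norm_sub_rev _ _
    have h4 := mul_le_mul_of_nonneg_left h1 (le_of_lt hlam)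
    rw [h2] at h4
    exact h4
  have hkey : (μ - Lf) * ‖u - xstar‖ ≤ lam * ‖u - x‖ := by
    rcases eq_or_lt_of_le (norm_nonneg (u - xstar)) with h | h
    · rw [← h, mul_zero]; positivity
    · have hh : (μ - Lf) * ‖u - xstar‖^2 ≤ lam * (‖u - x‖ * ‖u - xstar‖) :=
        le_trans hmono (le_trans hcomb hrhs)
      nlinarith
  clear hΦ hΦval hΨ hΨval VI1 VI2 VI2' hcomb hmono hrhs Ψ Φ
  -- finish with triangle inequality
  have htri : ‖x - xstar‖ ≤ ‖x - u‖ + ‖u - xstar‖ := by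
    have h5 : x - xstar = (x - u) + (u - xstar) := by abel
    rw [h5]; exact norm_add_le _ _
  have hxu : ‖u - x‖ = ‖x - u‖ := norm_sub_rev u x
  rw [hxu] at hkey
  have hσ : (0:ℝ) < μ - Lf := by linarith
  have hfin : (μ - Lf) * ‖x - xstar‖ ≤ (μ - Lf + lam) * ‖x - u‖ := by
    nlinarith [mul_le_mul_of_nonneg_left htri hσ.le]
  have hden : (0:ℝ) < μ - Lf + lam := by linarith
  rw [hγ, div_mul_eq_mul_div, div_le_iff₀ hden]
  calc (μ - Lf) * lam * ‖x - xstar‖ = lam * ((μ - Lf) * ‖x - xstar‖) := by ring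
    _ ≤ lam * ((μ - Lf + lam) * ‖x - u‖) := mul_le_mul_of_nonneg_left hfin hlam.le
    _ = lam * ‖x - u‖ * (μ - Lf + lam) := by ring
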